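/- The function I : [0, ∞) → ℝ is continuous, and I(t) ≥ 0 for every t ≥ 0. -/

import Mathlib

open MeasureTheory Real intervalIntegral

/-- `log⁺ r = log (max 1 r)`. -/
noncomputable def logPlus (r : ℝ) : ℝ := Real.log (max 1 r)

/-- `I(t) = ∫₀¹ log⁺ |t + e^{2πiθ}| dθ − log⁺ t`. -/
noncomputable def Ifun (t : ℝ) : ℝ :=
  (∫ θ in (0:ℝ)..1, logPlus ‖(t : ℂ) + Complex.exp (2 * Real.pi * Complex.I * θ)‖)
    - logPlus t

lemma continuous_logPlus : Continuous logPlus :=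
  (continuous_const.max continuous_id).log fun x =>
    (one_pos.trans_le (le_max_left 1 x)).ne'

lemma logPlus_nonneg (r : ℝ) : 0 ≤ logPlus r := Real.log_nonneg (le_max_left _ _)

lemma log_le_logPlus {r : ℝ} (hr : 0 ≤ r) : Real.log r ≤ logPlus r := by
  rcases hr.eq_or_lt with h | h
  · simp [logPlus, ← h]
  · exact Real.log_le_log h (le_max_right _ _)

lemma exp_eq_circleMap (θ : ℝ) :
    Complex.exp (2 * Real.pi * Complex.I * θ) = circleMap 0 1 (2 * Real.pi * θ) := by
  simp only [circleMap, Complex.ofReal_one, one_mul, zero_add]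
  congr 1
  push_cast
  ring

lemma continuous_innerFun (t : ℝ) :
    Continuous fun θ : ℝ => (t : ℂ) + Complex.exp (2 * Real.pi * Complex.I * θ) := by
  fun_prop

lemma abs_inner_pos {t : ℝ} (ht : 1 < t) (θ : ℝ) :
    t - 1 ≤ ‖(t : ℂ) + Complex.exp (2 * Real.pi * Complex.I * θ)‖ := by
  rw [exp_eq_circleMap]
  have h1 : ‖circleMap 0 1 (2 * Real.pi * θ)‖ = 1 := by
    simp
  have h2 := norm_add_le ((t : ℂ) + circleMap 0 1 (2 * Real.pi * θ))
    (-(circleMap 0 1 (2 * Real.pi * θ)))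
  simp only [add_neg_cancel_right, norm_neg, h1] at h2
  have ht' : ‖(t : ℂ)‖ = t := by
    rw [Complex.norm_real, Real.norm_eq_abs, abs_of_pos (lt_trans one_pos ht)]
  linarith [h2, ht'.symm.le, ht'.le]

/-- Jensen-type computation: for `t > 1`,
`∫₀¹ log |t + e^{2πiθ}| dθ = log t`. -/
lemma jensen {t : ℝ} (ht : 1 < t) :
    (∫ θ in (0:ℝ)..1,
      Real.log (‖(t : ℂ) + Complex.exp (2 * Real.pi * Complex.I * θ)‖))
      = Real.log t := by
  have ht0 : (0:ℝ) < t := lt_trans one_pos ht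
  -- membership in the slit plane
  have hmem : ∀ z ∈ Metric.closedBall (0:ℂ) 1, ((t : ℂ) + z) ∈ Complex.slitPlane := by
    intro z hz
    rw [Complex.mem_slitPlane_iff]
    left
    have hre : |z.re| ≤ 1 := by
      have := Complex.abs_re_le_norm z
      simp only [Metric.mem_closedBall, Complex.dist_eq, sub_zero] at hz
      linarith
    have := (abs_le.mp hre).1
    simp only [Complex.add_re, Complex.ofReal_re]
    linarith
  have hd : DifferentiableOn ℂ (fun z => Complex.log ((t : ℂ) + z))
      (Metric.closedBall 0 1) := by
    intro z hz
    exact ((Complex.differentiableAt_log (hmem z hz)).comp z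
      ((differentiableAt_const _).add differentiableAt_id)).differentiableWithinAt
  have key := hd.circleIntegral_sub_inv_smul (w := 0) (Metric.mem_ball_self one_pos)
  -- unfold the circle integral
  rw [circleIntegral] at key
  simp only [deriv_circleMap, sub_zero, smul_eq_mul, add_zero] at key
  have h1 : ∀ θ : ℝ, circleMap 0 1 θ * Complex.I *
      ((circleMap 0 1 θ)⁻¹ * Complex.log ((t : ℂ) + circleMap 0 1 θ))
      = Complex.I * Complex.log ((t : ℂ) + circleMap 0 1 θ) := by
    intro θ
    have hne : circleMap 0 1 θ ≠ 0 := circleMap_ne_center one_ne_zero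
    field_simp
  simp_rw [h1] at key
  rw [intervalIntegral.integral_const_mul] at key
  have hC : (∫ θ in (0:ℝ)..(2 * π), Complex.log ((t : ℂ) + circleMap 0 1 θ))
      = 2 * π * Complex.log (t : ℂ) := by
    apply mul_left_cancel₀ Complex.I_ne_zero
    rw [key]; ring
  -- continuity of the complex integrand
  have hcont : Continuous fun θ : ℝ => Complex.log ((t : ℂ) + circleMap 0 1 θ) := by
    rw [continuous_iff_continuousAt]
    intro θ
    have h1c : ContinuousAt (fun z : ℂ => Complex.log ((t : ℂ) + z))
        (circleMap 0 1 θ) :=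
      (continuousAt_clog (hmem _ (circleMap_mem_closedBall 0 zero_le_one θ))).comp
        (continuousAt_const.add continuousAt_id)
    exact h1c.comp (continuous_circleMap 0 1).continuousAt
  -- take real parts
  have hre : (∫ θ in (0:ℝ)..(2 * π),
      Real.log (‖(t : ℂ) + circleMap 0 1 θ‖)) = 2 * π * Real.log t := by
    have h2 := Complex.reCLM.intervalIntegral_comp_comm (μ := volume)
      (hcont.intervalIntegrable 0 (2 * π))
    simp only [Complex.reCLM_apply, Complex.log_re] at h2
    rw [h2, hC]
    have h3 : (2 * (π : ℂ) * Complex.log (t : ℂ))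
        = ((2 * π * Real.log t : ℝ) : ℂ) := by
      rw [← Complex.ofReal_log ht0.le]; push_cast; ring
    rw [h3, Complex.ofReal_re]
  -- substitution θ ↦ 2πθ
  have hsub := intervalIntegral.smul_integral_comp_mul_left
    (a := 0) (b := 1)
    (fun θ => Real.log (‖(t : ℂ) + circleMap 0 1 θ‖)) (2 * π)
  simp only [mul_zero, mul_one, smul_eq_mul] at hsub
  rw [hre] at hsub
  have h2π : (2 * π) ≠ 0 := by positivity
  have hfinal : (∫ θ in (0:ℝ)..1,
      Real.log (‖(t : ℂ) + circleMap 0 1 (2 * π * θ)‖)) = Real.log t :=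
    mul_left_cancel₀ h2π hsub
  rw [← hfinal]
  apply intervalIntegral.integral_congr
  intro θ _
  simp only [exp_eq_circleMap]

lemma continuous_integrand (t : ℝ) :
    Continuous fun θ : ℝ =>
      logPlus (‖(t : ℂ) + Complex.exp (2 * Real.pi * Complex.I * θ)‖) :=
  continuous_logPlus.comp (continuous_norm.comp (continuous_innerFun t))

theorem stmt1 :
    ContinuousOn Ifun (Set.Ici (0:ℝ)) ∧ ∀ t : ℝ, 0 ≤ t → 0 ≤ Ifun t := by
  constructor
  · -- continuity
    have hF : Continuous (Function.uncurry fun (t θ : ℝ) =>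
        logPlus (‖(t : ℂ) + Complex.exp (2 * Real.pi * Complex.I * θ)‖)) := by
      apply continuous_logPlus.comp
      apply continuous_norm.comp
      fun_prop
    have hI : Continuous fun t : ℝ => ∫ θ in (0:ℝ)..1,
        logPlus (‖(t : ℂ) + Complex.exp (2 * Real.pi * Complex.I * θ)‖) :=
      intervalIntegral.continuous_parametric_intervalIntegral_of_continuous' hF 0 1
    exact (hI.sub continuous_logPlus).continuousOn
  · -- nonnegativity
    intro t ht
    rcases le_or_gt t 1 with h1 | h1
    · have hz : logPlus t = 0 := by simp [logPlus, max_eq_left h1]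
      rw [Ifun, hz, sub_zero]
      apply intervalIntegral.integral_nonneg zero_le_one
      intro θ _
      exact logPlus_nonneg _
    · have hj := jensen h1
      have hcont_log : Continuous fun θ : ℝ =>
          Real.log (‖(t : ℂ) + Complex.exp (2 * Real.pi * Complex.I * θ)‖) := by
        rw [continuous_iff_continuousAt]
        intro θ
        have hpos : ‖(t : ℂ) + Complex.exp (2 * Real.pi * Complex.I * θ)‖ ≠ 0 := by
          have := abs_inner_pos h1 θ
          intro h; rw [h] at this; linarith
        have h2c : ContinuousAt (fun θ : ℝ =>
            ‖(t : ℂ) + Complex.exp (2 * Real.pi * Complex.I * θ)‖) θ :=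
          (continuous_norm.comp (continuous_innerFun t)).continuousAt
        exact h2c.log hpos
      have hmono : (∫ θ in (0:ℝ)..1,
          Real.log (‖(t : ℂ) + Complex.exp (2 * Real.pi * Complex.I * θ)‖))
          ≤ ∫ θ in (0:ℝ)..1,
          logPlus (‖(t : ℂ) + Complex.exp (2 * Real.pi * Complex.I * θ)‖) := by
        apply intervalIntegral.integral_mono_on zero_le_one
          (hcont_log.intervalIntegrable 0 1)
          ((continuous_integrand t).intervalIntegrable 0 1)
        intro θ _
        exact log_le_logPlus (norm_nonneg _)
      have hlp : logPlus t = Real.log t := by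
        rw [logPlus, max_eq_right h1.le]
      rw [Ifun, hlp, sub_nonneg, ← hj]
      exact hmono
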